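/- Boundary distance comparison forcing the minimizer onto the slice: let Ω ⊂ ℂ^n be bounded convex of finite type τ with defining function ρ, let h : ℂ^m → ℝ₊ satisfy h(w) ≍ ∑|w_i|^{2q_i} with each q_i > τ, and let H̃_δ = {(z,w) : ρ(z)+h(w) = δ}. Fix P₀ ∈ ∂Ω and let P̃₁ = (Q₁, w) ∈ H̃_δ realize the Euclidean distance from (P₀,0) to H̃_δ. Then for all sufficiently small δ > 0 (depending only on Ω, h) one has w = 0, i.e., ρ(Q₁) = δ and the closest point lies in ℂ^n × {0}. -/

import Mathlib

set_option maxHeartbeats 1000000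


/-- boundary distance comparison forcing the minimizer onto the slice:
for a convex domain of finite type τ (expressed through the distance estimate
dist(z, {ρ = ρ(z)+η}) ≤ C η^{1/τ}) and h ≍ ∑|w_i|^{2q_i} with all q_i > τ, for all
sufficiently small δ > 0, any point (Q₁,w) of H̃_δ = {ρ(z)+h(w) = δ} minimizing the
Euclidean distance to (P₀,0) has w = 0, i.e. ρ(Q₁) = δ. -/
theorem stmt19 (n mdim : ℕ) (τ : ℝ) (hτ : 1 ≤ τ)
    (q : Fin mdim → ℕ) (hq : ∀ i, τ < (q i : ℝ))
    (Ω : Set (EuclideanSpace ℂ (Fin n))) (hconv : Convex ℝ Ω) (hopen : IsOpen Ω)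
    (hbdd : Bornology.IsBounded Ω)
    (ρ : EuclideanSpace ℂ (Fin n) → ℝ) (hρc : Continuous ρ)
    (hΩ : Ω = {z | ρ z < 0})
    (P0 : EuclideanSpace ℂ (Fin n)) (hP0 : ρ P0 = 0)
    (C : ℝ) (hC : 0 < C)
    -- consequence of finite type τ: one can raise the level of ρ by η moving at most C η^{1/τ}
    (hft : ∀ z : EuclideanSpace ℂ (Fin n), ‖z - P0‖ ≤ 1 → ∀ η : ℝ, 0 < η → η ≤ 1 →
      ∃ z' : EuclideanSpace ℂ (Fin n), ρ z' = ρ z + η ∧ ‖z' - z‖ ≤ C * η ^ (1/τ))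
    (h : EuclideanSpace ℂ (Fin mdim) → ℝ)
    (c₁ c₂ : ℝ) (hc₁ : 0 < c₁) (hc₂ : 0 < c₂)
    (hcomp : ∀ w : EuclideanSpace ℂ (Fin mdim),
      c₁ * ∑ i, ‖w i‖ ^ (2 * q i) ≤ h w ∧
      h w ≤ c₂ * ∑ i, ‖w i‖ ^ (2 * q i)) :
    ∃ δ₀ : ℝ, 0 < δ₀ ∧ ∀ δ : ℝ, 0 < δ → δ < δ₀ →
      ∀ (Q₁ : EuclideanSpace ℂ (Fin n)) (w : EuclideanSpace ℂ (Fin mdim)),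
        ρ Q₁ + h w = δ →
        (∀ (Q' : EuclideanSpace ℂ (Fin n)) (w' : EuclideanSpace ℂ (Fin mdim)),
          ρ Q' + h w' = δ →
          ‖Q₁ - P0‖ ^ 2 + ‖w‖ ^ 2 ≤ ‖Q' - P0‖ ^ 2 + ‖w'‖ ^ 2) →
        w = 0 ∧ ρ Q₁ = δ := by
  
  have hτ0 : (0:ℝ) < τ := lt_of_lt_of_le one_pos hτ
  -- h 0 = 0
  have hq1 : ∀ i, 1 ≤ q i := by
    intro i
    have : (1:ℝ) < (q i : ℝ) := lt_of_le_of_lt hτ (hq i)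
    exact_mod_cast this.le
  have hzero : h 0 = 0 := by
    obtain ⟨h1, h2⟩ := hcomp 0
    have hsum0 : ∑ i, ‖(0 : EuclideanSpace ℂ (Fin mdim)) i‖ ^ (2 * q i) = 0 := by
      apply Finset.sum_eq_zero
      intro i _
      have : (0 : EuclideanSpace ℂ (Fin mdim)) i = 0 := rfl
      rw [this, norm_zero]
      exact zero_pow (by have := hq1 i; omega)
    rw [hsum0] at h1 h2
    simp only [mul_zero] at h1 h2
    linarith
  rcases Nat.eq_zero_or_pos mdim with hm | hm
  · subst hm
    refine ⟨1, one_pos, fun δ hδ _ Q₁ w hmem _ => ?_⟩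
    have hw : w = 0 := Subsingleton.elim w 0
    subst hw
    rw [hzero] at hmem
    exact ⟨rfl, by linarith⟩
  -- main case
  set s : ℕ := ⌊2*τ⌋₊ + 1 with hs_def
  have hs_gt : 2*τ < (s:ℝ) := by
    have := Nat.lt_floor_add_one (2*τ)
    rw [hs_def]
    push_cast
    push_cast at this
    linarith
  have hs_le : ∀ i, s ≤ 2 * q i := by
    intro i
    have h2 : 2*τ < ((2 * q i : ℕ) : ℝ) := by push_cast; linarith [hq i]
    have h3 : (⌊2*τ⌋₊ : ℝ) ≤ 2*τ := Nat.floor_le (by linarith)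
    have : (⌊2*τ⌋₊ : ℝ) < ((2 * q i : ℕ) : ℝ) := lt_of_le_of_lt h3 h2
    have : ⌊2*τ⌋₊ < 2 * q i := by exact_mod_cast this
    omega
  set K : ℝ := c₂ * mdim with hK_def
  have hK : 0 < K := mul_pos hc₂ (by exact_mod_cast hm)
  set M : ℝ := C^2 + 2*C with hM_def
  have hM : 0 < M := by positivity
  set e : ℝ := (s:ℝ)/(2*τ) - 1 with he_def
  have he : 0 < e := by
    have : 1 < (s:ℝ)/(2*τ) := (one_lt_div (by linarith)).mpr hs_gt
    simp only [he_def]; linarith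
  set B : ℝ := K * M ^ ((s:ℝ)/2) with hB_def
  have hB : 0 < B := mul_pos hK (Real.rpow_pos_of_pos hM _)
  set η₂ : ℝ := min (1/2) ((1/(2*B)) ^ (1/e)) with hη₂_def
  have hη₂pos : 0 < η₂ := lt_min (by norm_num) (Real.rpow_pos_of_pos (by positivity) _)
  have hη₂half : η₂ ≤ 1/2 := min_le_left _ _
  have hη₂key : ∀ η : ℝ, 0 < η → η ≤ η₂ → B * η ^ e < 1 := by
    intro η hη hηle
    have h1 : η ^ e ≤ ((1/(2*B)) ^ (1/e)) ^ e :=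
      Real.rpow_le_rpow hη.le (hηle.trans (min_le_right _ _)) he.le
    have h2 : ((1/(2*B)) ^ (1/e)) ^ e = 1/(2*B) := by
      rw [← Real.rpow_mul (by positivity), one_div_mul_cancel he.ne', Real.rpow_one]
    have h3 : B * η ^ e ≤ B * (1/(2*B)) := by
      apply mul_le_mul_of_nonneg_left _ hB.le
      rw [← h2]; exact h1
    have h4 : B * (1/(2*B)) = 1/2 := by field_simp
    linarith
  -- eventual smallness conditions
  have htend : Filter.Tendsto (fun δ : ℝ => C * δ ^ (1/τ)) (nhdsWithin 0 (Set.Ioi 0)) (nhds 0) := by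
    have hne : (1:ℝ)/τ ≠ 0 := by positivity
    have h1 : Filter.Tendsto (fun δ : ℝ => δ ^ (1/τ)) (nhds (0:ℝ)) (nhds 0) := by
      have hc := Real.continuousAt_rpow_const 0 (1/τ) (Or.inr (by positivity))
      simpa [ContinuousAt, Real.zero_rpow (show τ⁻¹ ≠ 0 by positivity)] using hc
    have h2 := (h1.mono_left (nhdsWithin_le_nhds :
      nhdsWithin (0:ℝ) (Set.Ioi 0) ≤ nhds 0)).const_mul C
    simpa using h2
  have hev : {δ : ℝ | δ < 1 ∧ C * δ ^ (1/τ) < 1 ∧ K * (C * δ ^ (1/τ))^s < η₂} ∈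
      nhdsWithin (0:ℝ) (Set.Ioi 0) := by
    have e1 : ∀ᶠ δ in nhdsWithin (0:ℝ) (Set.Ioi 0), δ < 1 :=
      Filter.Eventually.filter_mono nhdsWithin_le_nhds (gt_mem_nhds one_pos)
    have e2 : ∀ᶠ δ in nhdsWithin (0:ℝ) (Set.Ioi 0), C * δ ^ (1/τ) < 1 :=
      htend.eventually_lt_const one_pos
    have e3 : ∀ᶠ δ in nhdsWithin (0:ℝ) (Set.Ioi 0), K * (C * δ ^ (1/τ))^s < η₂ := by
      have ht : Filter.Tendsto (fun δ : ℝ => K * (C * δ ^ (1/τ))^s)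
          (nhdsWithin 0 (Set.Ioi 0)) (nhds (K * 0^s)) := (htend.pow s).const_mul K
      have h0 : K * (0:ℝ)^s = 0 := by
        rw [zero_pow (by omega : s ≠ 0), mul_zero]
      rw [h0] at ht
      exact ht.eventually_lt_const hη₂pos
    filter_upwards [e1, e2, e3] with δ h1 h2 h3
    exact ⟨h1, h2, h3⟩
  obtain ⟨δ₀, hδ₀mem, hδ₀sub⟩ := mem_nhdsGT_iff_exists_Ioo_subset.mp hev
  refine ⟨δ₀, hδ₀mem, ?_⟩
  intro δ hδ hδlt Q₁ w hmem hmin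
  obtain ⟨hδ1, hg1, hg2⟩ := hδ₀sub ⟨hδ, hδlt⟩
  have hgd0 : 0 ≤ C * δ ^ (1/τ) := by positivity
  -- first competitor: from P0
  obtain ⟨Z, hZρ, hZd⟩ := hft P0 (by simp) δ hδ hδ1.le
  have hZmem : ρ Z + h 0 = δ := by rw [hzero, hZρ, hP0]; ring
  have hmin1 := hmin Z 0 hZmem
  have hnz : ‖(0 : EuclideanSpace ℂ (Fin mdim))‖ = 0 := norm_zero
  have hbound : ‖Q₁ - P0‖^2 + ‖w‖^2 ≤ (C*δ^(1/τ))^2 := by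
    have hZ2 : ‖Z - P0‖^2 ≤ (C*δ^(1/τ))^2 := pow_le_pow_left₀ (norm_nonneg _) hZd 2
    rw [hnz] at hmin1
    have h02 : (0:ℝ)^2 = 0 := by norm_num
    rw [h02] at hmin1
    linarith
  have ha1 : ‖Q₁ - P0‖ ≤ C*δ^(1/τ) :=
    le_of_pow_le_pow_left₀ two_ne_zero hgd0 (by linarith [sq_nonneg ‖w‖])
  have hw1 : ‖w‖ ≤ C*δ^(1/τ) :=
    le_of_pow_le_pow_left₀ two_ne_zero hgd0 (by linarith [sq_nonneg ‖Q₁ - P0‖])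
  have ha1' : ‖Q₁ - P0‖ ≤ 1 := ha1.trans hg1.le
  have hwle1 : ‖w‖ ≤ 1 := hw1.trans hg1.le
  -- bound sum by norm power
  have hsum : ∑ i, ‖w i‖ ^ (2*q i) ≤ (mdim:ℝ) * ‖w‖^s := by
    have hterm : ∀ i ∈ Finset.univ, ‖w i‖ ^ (2*q i) ≤ ‖w‖^s := by
      intro i _
      have hwi : ‖w i‖ ≤ ‖w‖ := by
        rw [EuclideanSpace.norm_eq]
        refine le_trans ?_ (Real.sqrt_le_sqrt (Finset.single_le_sum
          (fun j _ => sq_nonneg ‖w j‖) (Finset.mem_univ i)))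
        rw [Real.sqrt_sq (norm_nonneg _)]
      have hwi1 : ‖w i‖ ≤ 1 := hwi.trans hwle1
      calc ‖w i‖ ^ (2*q i) ≤ ‖w i‖ ^ s :=
            pow_le_pow_of_le_one (norm_nonneg _) hwi1 (hs_le i)
        _ ≤ ‖w‖^s := pow_le_pow_left₀ (norm_nonneg _) hwi s
    calc ∑ i, ‖w i‖ ^ (2*q i) ≤ ∑ _i : Fin mdim, ‖w‖^s :=
          Finset.sum_le_sum hterm
      _ = (mdim:ℝ) * ‖w‖^s := by rw [Finset.sum_const, Finset.card_univ,
          Fintype.card_fin, nsmul_eq_mul]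
  have hhw : h w ≤ K * ‖w‖^s := by
    have := (hcomp w).2
    calc h w ≤ c₂ * ∑ i, ‖w i‖ ^ (2*q i) := this
      _ ≤ c₂ * ((mdim:ℝ) * ‖w‖^s) := by
          apply mul_le_mul_of_nonneg_left hsum hc₂.le
      _ = K * ‖w‖^s := by rw [hK_def]; ring
  have hη2' : h w ≤ η₂ := by
    have h1 : ‖w‖^s ≤ (C*δ^(1/τ))^s := pow_le_pow_left₀ (norm_nonneg _) hw1 s
    have := mul_le_mul_of_nonneg_left h1 hK.le
    linarith [hhw]
  have hηle1 : h w ≤ 1 := by linarith [hη₂half]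
  by_cases hw0 : w = 0
  · refine ⟨hw0, ?_⟩
    rw [hw0, hzero] at hmem
    linarith
  exfalso
  have hηpos : 0 < h w := by
    have h1 := (hcomp w).1
    have hspos : 0 < ∑ i, ‖w i‖^(2*q i) := by
      obtain ⟨i, hi⟩ : ∃ i, w i ≠ 0 := by
        by_contra hcon
        push_neg at hcon
        exact hw0 (PiLp.ext hcon)
      exact Finset.sum_pos' (fun j _ => by positivity)
        ⟨i, Finset.mem_univ i, pow_pos (norm_pos_iff.mpr hi) _⟩
    exact lt_of_lt_of_le (mul_pos hc₁ hspos) h1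
  -- second competitor: from Q₁
  obtain ⟨Q₂, hQ₂ρ, hQ₂d⟩ := hft Q₁ ha1' (h w) hηpos hηle1
  have hQ₂mem : ρ Q₂ + h 0 = δ := by rw [hzero, hQ₂ρ]; linarith
  have hmin2 := hmin Q₂ 0 hQ₂mem
  rw [hnz] at hmin2
  set t : ℝ := (h w) ^ (1/τ) with ht_def
  have ht0 : 0 ≤ t := Real.rpow_nonneg hηpos.le _
  have ht1 : t ≤ 1 := Real.rpow_le_one hηpos.le hηle1 (by positivity)
  have htri : ‖Q₂ - P0‖ ≤ ‖Q₁ - P0‖ + C * t := by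
    calc ‖Q₂ - P0‖ ≤ ‖Q₂ - Q₁‖ + ‖Q₁ - P0‖ := norm_sub_le_norm_sub_add_norm_sub _ _ _
      _ ≤ ‖Q₁ - P0‖ + C * t := by linarith [hQ₂d]
  have hw2 : ‖w‖^2 ≤ M * t := by
    have hb2 : ‖Q₂ - P0‖^2 ≤ (‖Q₁ - P0‖ + C * t)^2 :=
      pow_le_pow_left₀ (norm_nonneg _) htri 2
    have hCt : 0 ≤ C * t := by positivity
    have hexpand : (‖Q₁ - P0‖ + C * t)^2
        = ‖Q₁ - P0‖^2 + 2 * (‖Q₁ - P0‖ * (C * t)) + C^2 * (t * t) := by ring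
    have e1 : ‖Q₁ - P0‖ * (C * t) ≤ 1 * (C * t) :=
      mul_le_mul_of_nonneg_right ha1' hCt
    have e2 : t * t ≤ t := mul_le_of_le_one_left ht0 ht1
    have e3 : C^2 * (t * t) ≤ C^2 * t := mul_le_mul_of_nonneg_left e2 (sq_nonneg C)
    have h02 : (0:ℝ)^2 = 0 := by norm_num
    rw [h02] at hmin2
    have hMt : M * t = C^2 * t + 2 * (1 * (C * t)) := by rw [hM_def]; ring
    linarith
  -- lower bound via rpow manipulation
  have hwpow : (‖w‖:ℝ)^s = (‖w‖^2) ^ ((s:ℝ)/2) := by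
    rw [← Real.rpow_natCast ‖w‖ s, ← Real.rpow_natCast ‖w‖ 2,
      ← Real.rpow_mul (norm_nonneg w)]
    congr 1
    push_cast
    ring
  have hM2 : (‖w‖^2) ^ ((s:ℝ)/2) ≤ (M * t) ^ ((s:ℝ)/2) :=
    Real.rpow_le_rpow (sq_nonneg _) hw2 (by positivity)
  have hMt : (M * t) ^ ((s:ℝ)/2) = M ^ ((s:ℝ)/2) * t ^ ((s:ℝ)/2) :=
    Real.mul_rpow hM.le ht0
  have htpow : t ^ ((s:ℝ)/2) = (h w) ^ ((s:ℝ)/(2*τ)) := by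
    rw [ht_def, ← Real.rpow_mul hηpos.le]
    congr 1
    field_simp
  have hexp : (s:ℝ)/(2*τ) = 1 + e := by rw [he_def]; ring
  have hsplit : (h w) ^ ((s:ℝ)/(2*τ)) = h w * (h w) ^ e := by
    rw [hexp, Real.rpow_add hηpos, Real.rpow_one]
  have hchain : h w ≤ B * (h w * (h w) ^ e) := by
    calc h w ≤ K * ‖w‖^s := hhw
      _ = K * ((‖w‖^2) ^ ((s:ℝ)/2)) := by rw [hwpow]
      _ ≤ K * ((M * t) ^ ((s:ℝ)/2)) := mul_le_mul_of_nonneg_left hM2 hK.le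
      _ = B * (h w * (h w) ^ e) := by
          rw [hMt, htpow, hsplit, hB_def]; ring
  have hfinal : 1 ≤ B * (h w) ^ e := by
    refine le_of_mul_le_mul_right ?_ hηpos
    calc 1 * h w = h w := one_mul _
      _ ≤ B * (h w * (h w) ^ e) := hchain
      _ = (B * (h w) ^ e) * h w := by ring
  linarith [hη₂key (h w) hηpos hη2']
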